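/- (Strong duality, trace case.) For every symmetric f ∈ ℝ⟨x⟩ of degree at most 2d, sup { τ ∈ ℝ : f − τ is cyclically equivalent to an element of Σ_{2d} } = inf { L(f) : L : ℝ⟨x⟩_{2d} → ℝ linear, L(p*) = L(p) for all p, L(1) = 1, L(σ) ≥ 0 for all σ ∈ Σ_{2d}, and L(pq) = L(qp) whenever p, q ∈ ℝ⟨x⟩ with deg(pq) ≤ 2d }, as an equality in the extended reals. -/

import Mathlib

open scoped Matrix

/-- `ℝ⟨x₁,…,xₙ⟩`: noncommutative polynomials with real coefficients in `n`
noncommuting letters, realized as the monoid algebra of the free monoid on `Fin n`. -/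
abbrev NCPoly (n : ℕ) : Type := MonoidAlgebra ℝ (FreeMonoid (Fin n))

/-- The canonical involution `f ↦ f⋆` on `ℝ⟨x⟩`: it fixes `ℝ` and each letter `xᵢ`
and reverses words. -/
noncomputable def ncStar {n : ℕ} (f : NCPoly n) : NCPoly n :=
  MonoidAlgebra.mapDomain FreeMonoid.reverse f

/-- `degLE f d`: the nc polynomial `f` has degree at most `d`. -/
def degLE {n : ℕ} (f : NCPoly n) (d : ℕ) : Prop :=
  ∀ w ∈ f.coeff.support, FreeMonoid.length w ≤ d

/-- The `i`-th letter `xᵢ` as an nc polynomial. -/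
noncomputable def ncX {n : ℕ} (i : Fin n) : NCPoly n :=
  MonoidAlgebra.of ℝ (FreeMonoid (Fin n)) (FreeMonoid.of i)

/-- A word `w` viewed as an nc polynomial (the monomial `w` with coefficient `1`). -/
noncomputable def ncWord {n : ℕ} (w : FreeMonoid (Fin n)) : NCPoly n :=
  MonoidAlgebra.of ℝ (FreeMonoid (Fin n)) w

/-- Evaluation of an nc polynomial at a tuple `A = (A₁,…,Aₙ)` of square matrices:
the algebra homomorphism `ℝ⟨x⟩ → ℝ^{r×r}` sending `xᵢ` to `Aᵢ`. -/
noncomputable def ncEval {n r : ℕ} (A : Fin n → Matrix (Fin r) (Fin r) ℝ) :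
    NCPoly n →ₐ[ℝ] Matrix (Fin r) (Fin r) ℝ :=
  MonoidAlgebra.lift (R := ℝ) (M := FreeMonoid (Fin n)) (A := _) (FreeMonoid.lift A)

/-- The cone `Σ` of sums of Hermitian squares `Σᵢ gᵢ⋆ gᵢ`. -/
def SOHS (n : ℕ) : Set (NCPoly n) :=
  { f | ∃ (k : ℕ) (g : Fin k → NCPoly n), f = ∑ i, ncStar (g i) * g i }

/-- The truncated cone `Σ_{2d}`: sums of Hermitian squares `Σᵢ gᵢ⋆ gᵢ` with `deg gᵢ ≤ d`. -/
def SOHSdeg (n d : ℕ) : Set (NCPoly n) :=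
  { f | ∃ (k : ℕ) (g : Fin k → NCPoly n), (∀ i, degLE (g i) d) ∧ f = ∑ i, ncStar (g i) * g i }

/-- `f ∼cyc g`: `f - g` is a finite sum of commutators. -/
def cycEq {n : ℕ} (f g : NCPoly n) : Prop :=
  ∃ (k : ℕ) (p q : Fin k → NCPoly n), f - g = ∑ i, (p i * q i - q i * p i)

/-- `Θ`: nc polynomials cyclically equivalent to a sum of Hermitian squares. -/
def Theta (n : ℕ) : Set (NCPoly n) :=
  { f | ∃ σ ∈ SOHS n, cycEq f σ }

/-- The quadratic module `Q(𝔤)` generated by a finite set `G` of nc polynomials: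
all finite sums `Σᵢ pᵢ⋆ gᵢ pᵢ` with `gᵢ ∈ G ∪ {1}`. -/
def QModule {n : ℕ} (G : Finset (NCPoly n)) : Set (NCPoly n) :=
  { f | ∃ (k : ℕ) (g p : Fin k → NCPoly n),
      (∀ i, g i ∈ (G : Set (NCPoly n)) ∪ {1}) ∧ f = ∑ i, ncStar (p i) * g i * p i }

/-- Words of degree (length) at most `d` in `n` letters. -/
def WordLE (n d : ℕ) : Type := { w : FreeMonoid (Fin n) // FreeMonoid.length w ≤ d }

noncomputable instance (n d : ℕ) : Fintype (WordLE n d) := by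
  have h : {l : List (Fin n) | l.length ≤ d}.Finite := List.finite_length_le (Fin n) d
  have : Finite (WordLE n d) := h.to_subtype
  exact Fintype.ofFinite _

instance (n d : ℕ) : DecidableEq (WordLE n d) := by
  unfold WordLE FreeMonoid; exact inferInstance

namespace SDAux

instance {n : ℕ} : DecidableEq (FreeMonoid (Fin n)) :=
  inferInstanceAs (DecidableEq (List (Fin n)))

variable {n : ℕ}

/-- degree-≤D polynomials as a submodule -/
noncomputable def degSub (n D : ℕ) : Submodule ℝ (NCPoly n) where
  carrier := {p | degLE p D}
  add_mem' := by
    intro a b ha hb w hw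
    rcases Finset.mem_union.1 (Finsupp.support_add hw) with h | h
    · exact ha w h
    · exact hb w h
  zero_mem' := by intro w hw; simp at hw
  smul_mem' := by
    intro c p hp w hw
    exact hp w (Finsupp.support_smul hw)

lemma mem_degSub {p : NCPoly n} {D : ℕ} : p ∈ degSub n D ↔ degLE p D := Iff.rfl

lemma ncWord_def (w : FreeMonoid (Fin n)) : ncWord w = MonoidAlgebra.single w 1 := rfl

lemma degLE_single {w : FreeMonoid (Fin n)} {c : ℝ} {D : ℕ} (h : FreeMonoid.length w ≤ D) :
    degLE (MonoidAlgebra.single w c : NCPoly n) D := by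
  intro w' hw'
  have := Finsupp.support_single_subset hw'
  simp only [Finset.mem_singleton] at this
  subst this; exact h

lemma degLE_one {D : ℕ} : degLE (1 : NCPoly n) D := by
  have : (1 : NCPoly n) = MonoidAlgebra.single 1 1 := rfl
  rw [this]
  exact degLE_single (by simp)

lemma degLE_mul {p q : NCPoly n} {a b : ℕ} (hp : degLE p a) (hq : degLE q b) :
    degLE (p * q) (a + b) := by
  intro w hw
  obtain ⟨u, hu, v, hv, rfl⟩ := Finset.mem_mul.1 (MonoidAlgebra.support_coeff_mul_subset p q hw)
  rw [FreeMonoid.length_mul]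
  exact add_le_add (hp u hu) (hq v hv)

lemma degLE_ncStar {p : NCPoly n} {D : ℕ} (hp : degLE p D) : degLE (ncStar p) D := by
  intro w hw
  obtain ⟨u, hu, rfl⟩ := Finset.mem_image.1 (Finsupp.mapDomain_support hw)
  rw [FreeMonoid.length_reverse]
  exact hp u hu

/-- ncStar as a linear map. -/
noncomputable def starL (n : ℕ) : NCPoly n →ₗ[ℝ] NCPoly n :=
  MonoidAlgebra.mapDomainLinearMap ℝ ℝ FreeMonoid.reverse

lemma starL_apply (p : NCPoly n) : starL n p = ncStar p := rfl

lemma ncStar_add (p q : NCPoly n) : ncStar (p + q) = ncStar p + ncStar q :=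
  map_add (starL n) p q

lemma ncStar_smul (c : ℝ) (p : NCPoly n) : ncStar (c • p) = c • ncStar p :=
  map_smul (starL n) c p

lemma ncStar_single (w : FreeMonoid (Fin n)) (c : ℝ) :
    ncStar (MonoidAlgebra.single w c : NCPoly n) = MonoidAlgebra.single w.reverse c :=
  MonoidAlgebra.mapDomain_single

lemma ncStar_zero : ncStar (0 : NCPoly n) = 0 := map_zero (starL n)

lemma ncStar_one : ncStar (1 : NCPoly n) = 1 := by
  have : (1 : NCPoly n) = MonoidAlgebra.single 1 1 := rfl
  rw [this, ncStar_single]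
  rfl

lemma ncStar_mul (p q : NCPoly n) : ncStar (p * q) = ncStar q * ncStar p := by
  induction p using MonoidAlgebra.induction_linear with
  | zero => simp [ncStar_zero]
  | add f g hf hg => rw [add_mul, ncStar_add, hf, hg, ncStar_add, mul_add]
  | single a b =>
    induction q using MonoidAlgebra.induction_linear with
    | zero => simp [ncStar_zero]
    | add f g hf hg => rw [mul_add, ncStar_add, hf, hg, ncStar_add, add_mul]
    | single c e =>
      show ncStar (MonoidAlgebra.single a b * MonoidAlgebra.single c e) = _
      rw [MonoidAlgebra.single_mul_single, ncStar_single, ncStar_single, ncStar_single,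
        MonoidAlgebra.single_mul_single, FreeMonoid.reverse_mul, mul_comm e b]

lemma ncStar_ncStar (p : NCPoly n) : ncStar (ncStar p) = p := by
  show MonoidAlgebra.ofCoeff (Finsupp.mapDomain _ (Finsupp.mapDomain _ p.coeff)) = p
  rw [← Finsupp.mapDomain_comp]
  have : (FreeMonoid.reverse ∘ FreeMonoid.reverse : FreeMonoid (Fin n) → FreeMonoid (Fin n)) = id := by
    funext w; simp [Function.comp, FreeMonoid.reverse_reverse]
  rw [this, Finsupp.mapDomain_id]

end SDAux
namespace SDAux

variable {n : ℕ}

/-- all rotations of a list, as a Finset -/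
def rotations (w : List (Fin n)) : Finset (List (Fin n)) :=
  (Finset.range (w.length + 1)).image (fun k => w.rotate k)

lemma rotations_nonempty (w : List (Fin n)) : (rotations w).Nonempty :=
  ⟨w.rotate 0, Finset.mem_image.2 ⟨0, by simp⟩⟩

lemma rotate_mem_rotations (w : List (Fin n)) (k : ℕ) : w.rotate k ∈ rotations w := by
  rcases Nat.eq_zero_or_pos w.length with h | h
  · have hw : w = [] := List.length_eq_zero_iff.1 h
    subst hw
    simp [rotations, List.rotate_nil]
  · refine Finset.mem_image.2 ⟨k % w.length, ?_, List.rotate_mod w k⟩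
    exact Finset.mem_range.2 (lt_of_lt_of_le (Nat.mod_lt _ h) (Nat.le_succ _))

lemma rotations_rotate_subset (w : List (Fin n)) (m : ℕ) :
    rotations (w.rotate m) ⊆ rotations w := by
  intro x hx
  obtain ⟨k, _, rfl⟩ := Finset.mem_image.1 hx
  rw [List.rotate_rotate]
  exact rotate_mem_rotations w (m + k)

lemma rotations_rotate (w : List (Fin n)) (m : ℕ) :
    rotations (w.rotate m) = rotations w := by
  refine Finset.Subset.antisymm (rotations_rotate_subset w m) ?_
  rcases Nat.eq_zero_or_pos w.length with h | h
  · have hw : w = [] := List.length_eq_zero_iff.1 h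
    subst hw; simp [List.rotate_nil]
  · set l := w.length with hl
    have key : (w.rotate m).rotate (l - m % l) = w := by
      rw [List.rotate_rotate]
      have : m + (l - m % l) = l * (m / l) + l := by
        have h1 : m % l ≤ l := le_of_lt (Nat.mod_lt _ h)
        have h2 : m = l * (m / l) + m % l := (Nat.div_add_mod m l).symm
        omega
      rw [this, ← List.rotate_rotate, List.rotate_length_mul, List.rotate_length]
    calc rotations w = rotations ((w.rotate m).rotate (l - m % l)) := by rw [key]
      _ ⊆ rotations (w.rotate m) := rotations_rotate_subset _ _

/-- canonical representative of the cyclic class of a list -/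
noncomputable def cycRepL (w : List (Fin n)) : List (Fin n) :=
  letI : LinearOrder (List (Fin n)) := List.instLinearOrder
  (rotations w).min' (rotations_nonempty w)

lemma cycRepL_mem (w : List (Fin n)) : cycRepL w ∈ rotations w := by
  letI : LinearOrder (List (Fin n)) := List.instLinearOrder
  exact Finset.min'_mem _ _

lemma cycRepL_rotate (w : List (Fin n)) (m : ℕ) : cycRepL (w.rotate m) = cycRepL w := by
  unfold cycRepL
  congr 1
  exact rotations_rotate w m

lemma cycRepL_exists_split (w : List (Fin n)) :
    ∃ u v : List (Fin n), w = u ++ v ∧ cycRepL w = v ++ u := by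
  have h := cycRepL_mem w
  obtain ⟨k, hk, hkeq⟩ := Finset.mem_image.1 h
  have hk' : k ≤ w.length ∨ True := Or.inr trivial
  rcases le_or_gt k w.length with hle | hlt
  · refine ⟨w.take k, w.drop k, (List.take_append_drop k w).symm, ?_⟩
    rw [← hkeq, List.rotate_eq_drop_append_take hle]
  · -- k ≤ w.length since k < w.length + 1
    exact absurd (Finset.mem_range.1 hk) (by omega)

/-- canonical representative on FreeMonoid -/
noncomputable def cycRep (w : FreeMonoid (Fin n)) : FreeMonoid (Fin n) :=
  FreeMonoid.ofList (cycRepL w.toList)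

lemma cycRep_mul_comm (u v : FreeMonoid (Fin n)) : cycRep (u * v) = cycRep (v * u) := by
  unfold cycRep
  congr 1
  rw [FreeMonoid.toList_mul, FreeMonoid.toList_mul]
  have : (v.toList ++ u.toList) = (u.toList ++ v.toList).rotate u.toList.length := by
    rw [List.rotate_eq_drop_append_take (by simp), List.drop_left, List.take_left]
  rw [this, cycRepL_rotate]

lemma cycRep_split (w : FreeMonoid (Fin n)) :
    ∃ u v : FreeMonoid (Fin n), w = u * v ∧ cycRep w = v * u := by
  obtain ⟨u, v, h1, h2⟩ := cycRepL_exists_split w.toList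
  refine ⟨FreeMonoid.ofList u, FreeMonoid.ofList v, ?_, ?_⟩
  · apply FreeMonoid.toList.injective
    simpa [FreeMonoid.toList_mul] using h1
  · apply FreeMonoid.toList.injective
    simpa [FreeMonoid.toList_mul, cycRep] using h2

lemma length_cycRep (w : FreeMonoid (Fin n)) :
    FreeMonoid.length (cycRep w) = FreeMonoid.length w := by
  obtain ⟨u, v, h1, h2⟩ := cycRep_split w
  rw [h2, h1, FreeMonoid.length_mul, FreeMonoid.length_mul, Nat.add_comm]

/-- cyclic symmetrization map -/
noncomputable def Cmap (n : ℕ) : NCPoly n →ₗ[ℝ] NCPoly n :=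
  MonoidAlgebra.mapDomainLinearMap ℝ ℝ cycRep

lemma Cmap_single (w : FreeMonoid (Fin n)) (c : ℝ) :
    Cmap n (MonoidAlgebra.single w c) = MonoidAlgebra.single (cycRep w) c :=
  MonoidAlgebra.mapDomainLinearMap_single _ _ _

lemma Cmap_mul_comm (p q : NCPoly n) : Cmap n (p * q) = Cmap n (q * p) := by
  induction p using MonoidAlgebra.induction_linear with
  | zero => simp
  | add f g hf hg => rw [add_mul, map_add, hf, hg, ← map_add, ← mul_add]
  | single a b =>
    induction q using MonoidAlgebra.induction_linear with
    | zero => simp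
    | add f g hf hg => rw [mul_add, map_add, hf, hg, ← map_add, ← add_mul]
    | single c e =>
      show Cmap n (MonoidAlgebra.single a b * MonoidAlgebra.single c e)
        = Cmap n (MonoidAlgebra.single c e * MonoidAlgebra.single a b)
      rw [MonoidAlgebra.single_mul_single, MonoidAlgebra.single_mul_single,
        Cmap_single, Cmap_single, cycRep_mul_comm, mul_comm e b]

/-- generating set of bounded-degree word commutators -/
def wgens (n D : ℕ) : Set (NCPoly n) :=
  {x | ∃ u v : FreeMonoid (Fin n), FreeMonoid.length (u * v) ≤ D ∧
    x = ncWord (u * v) - ncWord (v * u)}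

lemma wgens_degLE {D : ℕ} : wgens n D ⊆ (degSub n D : Set (NCPoly n)) := by
  rintro x ⟨u, v, hl, rfl⟩
  have h1 : FreeMonoid.length (v * u) ≤ D := by
    rw [FreeMonoid.length_mul] at hl ⊢; omega
  exact sub_mem (degLE_single hl) (degLE_single h1)

lemma wspan_degLE {D : ℕ} {x : NCPoly n} (hx : x ∈ Submodule.span ℝ (wgens n D)) :
    degLE x D :=
  (Submodule.span_le.2 wgens_degLE) hx

lemma Cmap_wgen {D : ℕ} {x : NCPoly n} (hx : x ∈ wgens n D) : Cmap n x = 0 := by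
  obtain ⟨u, v, _, rfl⟩ := hx
  rw [map_sub]
  have : ncWord (u * v) = MonoidAlgebra.single u 1 * MonoidAlgebra.single v 1 := by
    rw [MonoidAlgebra.single_mul_single, one_mul]; rfl
  rw [this]
  have : ncWord (v * u) = MonoidAlgebra.single v 1 * MonoidAlgebra.single u 1 := by
    rw [MonoidAlgebra.single_mul_single, one_mul]; rfl
  rw [this, Cmap_mul_comm, sub_self]

/-- key: a bounded-degree polynomial killed by `Cmap` is in the span of
bounded-degree word commutators -/
lemma mem_wspan {D : ℕ} {g : NCPoly n} (hdeg : degLE g D) (hC : Cmap n g = 0) :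
    g ∈ Submodule.span ℝ (wgens n D) := by
  have hg : g = ∑ w ∈ g.coeff.support, (g.coeff w) • (ncWord w - ncWord (cycRep w)) := by
    have h1 : g = ∑ w ∈ g.coeff.support, MonoidAlgebra.single w (g.coeff w) := by
      conv_lhs => rw [← MonoidAlgebra.sum_coeff_single g]
      rfl
    have h2 : (0 : NCPoly n) = ∑ w ∈ g.coeff.support, MonoidAlgebra.single (cycRep w) (g.coeff w) := by
      rw [← hC]
      show MonoidAlgebra.ofCoeff (Finsupp.mapDomain cycRep g.coeff) = _
      rw [Finsupp.mapDomain, MonoidAlgebra.ofCoeff_finsuppSum]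
      rfl
    calc g = g - 0 := by rw [sub_zero]
      _ = ∑ w ∈ g.coeff.support, (MonoidAlgebra.single w (g.coeff w) - MonoidAlgebra.single (cycRep w) (g.coeff w)) := by
          rw [Finset.sum_sub_distrib, ← h1, ← h2]
      _ = ∑ w ∈ g.coeff.support, (g.coeff w) • (ncWord w - ncWord (cycRep w)) := by
          refine Finset.sum_congr rfl fun w _ => ?_
          rw [smul_sub, ncWord_def, ncWord_def, MonoidAlgebra.smul_single, MonoidAlgebra.smul_single,
            smul_eq_mul, mul_one]
  rw [hg]
  refine Submodule.sum_mem _ fun w hw => Submodule.smul_mem _ _ (Submodule.subset_span ?_)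
  obtain ⟨u, v, h1, h2⟩ := cycRep_split w
  exact ⟨u, v, by rw [← h1]; exact hdeg w hw, by rw [← h1, h2]⟩

/-- elements of the commutator span are genuine sums of commutators -/
lemma wspan_to_comm {D : ℕ} {x : NCPoly n} (hx : x ∈ Submodule.span ℝ (wgens n D)) :
    ∃ (k : ℕ) (p q : Fin k → NCPoly n), x = ∑ i, (p i * q i - q i * p i) := by
  obtain ⟨k, c, g, hsum⟩ := Submodule.mem_span_set'.1 hx
  choose u v hlen hval using fun i => (g i).2
  refine ⟨k, fun i => c i • ncWord (u i), fun i => ncWord (v i), ?_⟩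
  rw [← hsum]
  refine Finset.sum_congr rfl fun i _ => ?_
  rw [hval i]
  rw [smul_mul_assoc, mul_smul_comm, ← smul_sub]
  congr 1
  simp only [ncWord_def, MonoidAlgebra.single_mul_single, one_mul]

/-- sum of commutators is killed by Cmap -/
lemma Cmap_comm_sum {k : ℕ} (p q : Fin k → NCPoly n) :
    Cmap n (∑ i, (p i * q i - q i * p i)) = 0 := by
  rw [map_sum]
  refine Finset.sum_eq_zero fun i _ => ?_
  rw [map_sub, Cmap_mul_comm, sub_self]

end SDAux
namespace SDAux

variable {n : ℕ}

/-- truncation map to coefficients on words of length ≤ D -/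
noncomputable def TL (n D : ℕ) : NCPoly n →ₗ[ℝ] (WordLE n D → ℝ) where
  toFun p := fun w => p.coeff w.1
  map_add' := by intro p q; funext w; rfl
  map_smul' := by intro c p; funext w; rfl

lemma TL_apply {D : ℕ} (p : NCPoly n) (w : WordLE n D) : TL n D p w = p.coeff w.1 := rfl

/-- inclusion map from coefficient vectors to polynomials -/
noncomputable def JL (n D : ℕ) : (WordLE n D → ℝ) →ₗ[ℝ] NCPoly n where
  toFun c := ∑ w : WordLE n D, c w • ncWord w.1
  map_add' := by
    intro c c'; simp only [Pi.add_apply, add_smul, Finset.sum_add_distrib]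
  map_smul' := by
    intro t c
    simp only [Pi.smul_apply, smul_eq_mul, RingHom.id_apply, ← smul_smul, ← Finset.smul_sum]

lemma JL_coeff {D : ℕ} (c : WordLE n D → ℝ) (w : FreeMonoid (Fin n)) :
    (JL n D c).coeff w = if h : FreeMonoid.length w ≤ D then c ⟨w, h⟩ else 0 := by
  show (∑ w' : WordLE n D, c w' • ncWord w'.1).coeff w = _
  rw [MonoidAlgebra.coeff_sum, Finset.sum_apply']
  have hterm : ∀ w' : WordLE n D, (c w' • ncWord w'.1).coeff w = if w'.1 = w then c w' else 0 := by
    intro w'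
    rw [ncWord_def, MonoidAlgebra.smul_single, MonoidAlgebra.coeff_single, Finsupp.single_apply]
    split_ifs <;> simp
  rw [Finset.sum_congr rfl fun w' _ => hterm w']
  split_ifs with h
  · have hterm2 : ∀ w' : WordLE n D,
        (if w'.1 = w then c w' else 0) = if w' = (id ⟨w, h⟩ : WordLE n D) then c w' else 0 := by
      intro w'
      exact if_congr ((Subtype.ext_iff (a1 := w') (a2 := ⟨w, h⟩)).symm) rfl rfl
    rw [Finset.sum_congr rfl fun w' _ => hterm2 w', Finset.sum_ite_eq' Finset.univ]
    simp
    rfl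
  · refine Finset.sum_eq_zero fun b _ => ?_
    have : b.1 ≠ w := fun hc => h (hc ▸ b.2)
    simp [this]

lemma JL_TL {D : ℕ} {p : NCPoly n} (hp : degLE p D) : JL n D (TL n D p) = p := by
  apply MonoidAlgebra.ext
  apply Finsupp.ext
  intro w
  rw [JL_coeff]
  split_ifs with h
  · rfl
  · by_contra hc
    have : w ∈ p.coeff.support := Finsupp.mem_support_iff.2 fun h0 => hc h0.symm
    exact h (hp w this)

lemma TL_inj {D : ℕ} {p q : NCPoly n} (hp : degLE p D) (hq : degLE q D)
    (h : TL n D p = TL n D q) : p = q := by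
  rw [← JL_TL hp, ← JL_TL hq, h]

lemma degLE_JL {D : ℕ} (c : WordLE n D → ℝ) : degLE (JL n D c) D := by
  rw [← mem_degSub]
  refine Submodule.sum_mem _ fun w _ => Submodule.smul_mem _ _ ?_
  exact degLE_single w.2

/-- the Gram map: a matrix of coefficients to the corresponding polynomial -/
noncomputable def PsiL (n d : ℕ) : (WordLE n d → WordLE n d → ℝ) →ₗ[ℝ] NCPoly n where
  toFun G := ∑ u : WordLE n d, ∑ v : WordLE n d, G u v • ncWord (u.1.reverse * v.1)
  map_add' := by intro G H; simp only [Pi.add_apply, add_smul, Finset.sum_add_distrib]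
  map_smul' := by
    intro t G
    simp only [Pi.smul_apply, smul_eq_mul, RingHom.id_apply, ← smul_smul, ← Finset.smul_sum]

lemma degLE_PsiL (d : ℕ) (G : WordLE n d → WordLE n d → ℝ) : degLE (PsiL n d G) (2 * d) := by
  rw [← mem_degSub]
  refine Submodule.sum_mem _ fun u _ => Submodule.sum_mem _ fun v _ => Submodule.smul_mem _ _ ?_
  refine degLE_single ?_
  rw [FreeMonoid.length_mul, FreeMonoid.length_reverse, two_mul]
  exact add_le_add u.2 v.2

lemma ncStar_JL (d : ℕ) (c : WordLE n d → ℝ) :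
    ncStar (JL n d c) = ∑ u : WordLE n d, c u • ncWord u.1.reverse := by
  rw [← starL_apply]
  show starL n (∑ w : WordLE n d, c w • ncWord w.1) = _
  rw [map_sum]
  refine Finset.sum_congr rfl fun u _ => ?_
  rw [map_smul, starL_apply, ncWord_def, ncStar_single, ncWord_def]

lemma sq_expand (d : ℕ) (c : WordLE n d → ℝ) :
    ncStar (JL n d c) * (JL n d c) = PsiL n d (fun u v => c u * c v) := by
  rw [ncStar_JL]
  show _ = ∑ u : WordLE n d, ∑ v : WordLE n d, (c u * c v) • ncWord (u.1.reverse * v.1)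
  have : (JL n d c : NCPoly n) = ∑ w : WordLE n d, c w • ncWord w.1 := rfl
  rw [this, Finset.sum_mul_sum]
  refine Finset.sum_congr rfl fun u _ => Finset.sum_congr rfl fun v _ => ?_
  rw [smul_mul_assoc, mul_smul_comm, smul_smul]
  congr 1
  rw [ncWord_def, ncWord_def, MonoidAlgebra.single_mul_single, one_mul, ncWord_def]

section
open scoped MatrixOrder

lemma psd_sq {ι : Type*} [Fintype ι] [DecidableEq ι] {A : Matrix ι ι ℝ} (hA : A.PosSemidef) :
    ∃ B : Matrix ι ι ℝ, A = Bᴴ * B := by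
  obtain ⟨X, hX, -, h⟩ :=
        CFC.exists_sqrt_of_isSelfAdjoint_of_quasispectrumRestricts hA.isHermitian
          (QuasispectrumRestricts.nnreal_of_nonneg hA.nonneg)
  refine ⟨X, ?_⟩
  rw [← h]
  have : Xᴴ = X := hX.star_eq
  rw [this]

end

/-- every bounded SOHS is `PsiL` of a square Gram matrix -/
lemma sohs_to_B (d : ℕ) {p : NCPoly n} (hp : p ∈ SOHSdeg n d) :
    ∃ B : WordLE n d → WordLE n d → ℝ,
      p = PsiL n d (fun u v => ∑ j : WordLE n d, B j u * B j v) := by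
  obtain ⟨k, g, hdeg, rfl⟩ := hp
  set c : Fin k → WordLE n d → ℝ := fun i => TL n d (g i) with hc
  have hterm : ∀ i, ncStar (g i) * g i = PsiL n d (fun u v => c i u * c i v) := by
    intro i
    conv_lhs => rw [← JL_TL (hdeg i)]
    exact sq_expand d (c i)
  have hsum : ∑ i, ncStar (g i) * g i = PsiL n d (∑ i, fun u v => c i u * c i v) := by
    rw [map_sum]
    exact Finset.sum_congr rfl fun i _ => hterm i
  set Gf : WordLE n d → WordLE n d → ℝ := ∑ i, (fun u v => c i u * c i v) with hGf
  have hof : Matrix.of Gf =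
      ∑ i : Fin k, ((Matrix.of fun (_ : Fin 1) u => c i u)ᴴ * (Matrix.of fun (_ : Fin 1) u => c i u)) := by
    ext u v
    rw [Matrix.sum_apply]
    have : Gf u v = ∑ i, c i u * c i v := by
      rw [hGf, Finset.sum_apply, Finset.sum_apply]
    rw [Matrix.of_apply, this]
    refine Finset.sum_congr rfl fun i _ => ?_
    rw [Matrix.mul_apply, Fin.sum_univ_one, Matrix.conjTranspose_apply, Matrix.of_apply,
      Matrix.of_apply, star_trivial]
  have hpsd : (Matrix.of Gf).PosSemidef := by
    rw [hof]
    refine Finset.sum_induction _ _ (fun a b ha hb => ha.add hb) Matrix.PosSemidef.zero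
      (fun i _ => Matrix.posSemidef_conjTranspose_mul_self _)
  obtain ⟨B, hB⟩ := psd_sq hpsd
  refine ⟨fun j u => B j u, ?_⟩
  rw [hsum]
  congr 1

/-- conversely, `PsiL` of a square Gram matrix is a bounded SOHS -/
lemma B_to_sohs (d : ℕ) (B : WordLE n d → WordLE n d → ℝ) :
    PsiL n d (fun u v => ∑ j : WordLE n d, B j u * B j v) ∈ SOHSdeg n d := by
  set k := Fintype.card (WordLE n d) with hk
  set e : Fin k ≃ WordLE n d := (Fintype.equivFin _).symm with he
  refine ⟨k, fun i => JL n d (B (e i)), fun i => degLE_JL _, ?_⟩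
  have h1 : (fun u v => ∑ j : WordLE n d, B j u * B j v)
      = ∑ j : WordLE n d, (fun u v => B j u * B j v) := by
    funext u v
    rw [Finset.sum_apply, Finset.sum_apply]
  rw [h1, map_sum, ← Equiv.sum_comp e (fun j => PsiL n d fun u v => B j u * B j v)]
  exact Finset.sum_congr rfl fun i _ => (sq_expand d (B (e i))).symm

lemma sohs_degLE (d : ℕ) {p : NCPoly n} (hp : p ∈ SOHSdeg n d) : degLE p (2 * d) := by
  obtain ⟨B, rfl⟩ := sohs_to_B d hp
  exact degLE_PsiL d _

end SDAux
namespace SDAux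

variable {n : ℕ}

/-- the empty word -/
def em (n d : ℕ) : WordLE n d := ⟨1, by simp⟩

/-- truncated left-creation operator -/
noncomputable def Smat (n d : ℕ) (i : Fin n) : Matrix (WordLE n d) (WordLE n d) ℝ :=
  Matrix.of fun w' w => if w'.1.toList = i :: w.1.toList then (1 : ℝ) else 0

/-- the symmetrized shift: a symmetric matrix tuple -/
noncomputable def Xmat (n d : ℕ) (i : Fin n) : Matrix (WordLE n d) (WordLE n d) ℝ :=
  Smat n d i + (Smat n d i)ᵀ

lemma Xmat_apply (d : ℕ) (i : Fin n) (a b : WordLE n d) :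
    Xmat n d i a b = (if a.1.toList = i :: b.1.toList then (1 : ℝ) else 0)
      + (if b.1.toList = i :: a.1.toList then (1 : ℝ) else 0) := rfl

lemma Xmat_symm (d : ℕ) (i : Fin n) : (Xmat n d i)ᵀ = Xmat n d i := by
  unfold Xmat
  rw [Matrix.transpose_add, Matrix.transpose_transpose, add_comm]

/-- evaluation of nc polynomials at the tuple `Xmat` -/
noncomputable def piX (n d : ℕ) : NCPoly n →ₐ[ℝ] Matrix (WordLE n d) (WordLE n d) ℝ :=
  MonoidAlgebra.lift ℝ (Matrix (WordLE n d) (WordLE n d) ℝ) (FreeMonoid (Fin n)) (FreeMonoid.lift (Xmat n d))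

lemma piX_single (d : ℕ) (w : FreeMonoid (Fin n)) (c : ℝ) :
    piX n d (MonoidAlgebra.single w c) = c • (w.toList.map (Xmat n d)).prod := by
  show MonoidAlgebra.lift ℝ (Matrix (WordLE n d) (WordLE n d) ℝ) (FreeMonoid (Fin n)) (FreeMonoid.lift (Xmat n d))
      (MonoidAlgebra.single w c) = _
  rw [MonoidAlgebra.lift_single, FreeMonoid.lift_apply]

lemma piX_word (d : ℕ) (w : FreeMonoid (Fin n)) :
    piX n d (ncWord w) = (w.toList.map (Xmat n d)).prod := by
  rw [ncWord_def, piX_single, one_smul]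

lemma piX_star (d : ℕ) (p : NCPoly n) : piX n d (ncStar p) = (piX n d p)ᵀ := by
  induction p using MonoidAlgebra.induction_linear with
  | zero => simp [ncStar_zero]
  | add f g hf hg => rw [ncStar_add, map_add, map_add, Matrix.transpose_add, hf, hg]
  | single a b =>
    have h1 : ncStar (MonoidAlgebra.single a b : NCPoly n)
        = MonoidAlgebra.single a.reverse b := ncStar_single a b
    rw [h1, piX_single, piX_single, Matrix.transpose_smul]
    congr 1
    have h2 : (a.reverse.toList : List (Fin n)) = a.toList.reverse := rfl
    rw [h2, Matrix.transpose_list_prod, List.map_map, ← List.map_reverse]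
    have h3 : (Matrix.transpose ∘ Xmat n d : Fin n → Matrix (WordLE n d) (WordLE n d) ℝ)
        = Xmat n d := funext fun i => Xmat_symm d i
    rw [h3]

/-- the tracial positive functional -/
noncomputable def L0 (n d : ℕ) : NCPoly n →ₗ[ℝ] ℝ :=
  (Matrix.traceLinearMap (WordLE n d) ℝ ℝ).comp (piX n d).toLinearMap

lemma L0_apply (d : ℕ) (p : NCPoly n) : L0 n d p = Matrix.trace (piX n d p) := rfl

lemma L0_mul_comm (d : ℕ) (p q : NCPoly n) : L0 n d (p * q) = L0 n d (q * p) := by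
  rw [L0_apply, L0_apply, map_mul, map_mul, Matrix.trace_mul_comm]

lemma L0_star (d : ℕ) (p : NCPoly n) : L0 n d (ncStar p) = L0 n d p := by
  rw [L0_apply, L0_apply, piX_star, Matrix.trace_transpose]

lemma L0_wspan {d D : ℕ} {x : NCPoly n} (hx : x ∈ Submodule.span ℝ (wgens n D)) :
    L0 n d x = 0 := by
  have hsub : wgens n D ⊆ (LinearMap.ker (L0 n d) : Set (NCPoly n)) := by
    rintro y ⟨u, v, _, rfl⟩
    have h1 : ncWord (u * v) = ncWord u * ncWord v := by
      rw [ncWord_def, ncWord_def, ncWord_def, MonoidAlgebra.single_mul_single, one_mul]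
    have h2 : ncWord (v * u) = ncWord v * ncWord u := by
      rw [ncWord_def, ncWord_def, ncWord_def, MonoidAlgebra.single_mul_single, one_mul]
    have : L0 n d (ncWord (u * v) - ncWord (v * u)) = 0 := by
      rw [map_sub, h1, h2, L0_mul_comm, sub_self]
    exact this
  exact (Submodule.span_le.2 hsub) hx

lemma trace_transpose_mul_self_nonneg (d : ℕ) (A : Matrix (WordLE n d) (WordLE n d) ℝ) :
    0 ≤ Matrix.trace (Aᵀ * A) := by
  rw [Matrix.trace]
  refine Finset.sum_nonneg fun i _ => ?_
  rw [Matrix.diag_apply, Matrix.mul_apply]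
  exact Finset.sum_nonneg fun j _ => by rw [Matrix.transpose_apply]; exact mul_self_nonneg _

lemma eq_zero_of_trace_transpose_mul_self (d : ℕ) (A : Matrix (WordLE n d) (WordLE n d) ℝ)
    (h : Matrix.trace (Aᵀ * A) = 0) : A = 0 := by
  rw [Matrix.trace] at h
  have hterm : ∀ i ∈ Finset.univ, (0:ℝ) ≤ (Aᵀ * A).diag i := by
    intro i _
    rw [Matrix.diag_apply, Matrix.mul_apply]
    exact Finset.sum_nonneg fun j _ => by rw [Matrix.transpose_apply]; exact mul_self_nonneg _
  have hall := (Finset.sum_eq_zero_iff_of_nonneg hterm).1 h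
  ext j i
  have hi := hall i (Finset.mem_univ i)
  rw [Matrix.diag_apply, Matrix.mul_apply] at hi
  have hterm2 : ∀ k ∈ Finset.univ, (0:ℝ) ≤ Aᵀ i k * A k i := by
    intro k _
    rw [Matrix.transpose_apply]
    exact mul_self_nonneg _
  have := (Finset.sum_eq_zero_iff_of_nonneg hterm2).1 hi j (Finset.mem_univ j)
  rw [Matrix.transpose_apply] at this
  have : A j i = 0 := by nlinarith [this]
  simpa using this

lemma L0_sohs (d e : ℕ) {p : NCPoly n} (hp : p ∈ SOHSdeg n e) : 0 ≤ L0 n d p := by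
  obtain ⟨k, g, _, rfl⟩ := hp
  rw [map_sum]
  refine Finset.sum_nonneg fun i _ => ?_
  rw [L0_apply, map_mul, piX_star]
  exact trace_transpose_mul_self_nonneg d _

lemma L0_one (d : ℕ) : L0 n d (1 : NCPoly n) = Fintype.card (WordLE n d) := by
  rw [L0_apply, map_one, Matrix.trace_one]

/-- key triangularity lemma for the shift tuple -/
lemma tri (d : ℕ) : ∀ (l : List (Fin n)), l.length ≤ d → ∀ w' : WordLE n d,
    (w'.1.toList = l → ((l.map (Xmat n d)).prod) w' (em n d) = 1) ∧
    (w'.1.toList ≠ l → l.length ≤ w'.1.toList.length →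
      ((l.map (Xmat n d)).prod) w' (em n d) = 0) := by
  intro l
  induction l with
  | nil =>
    intro _ w'
    constructor
    · intro h
      have hw : w' = em n d := by
        refine Subtype.ext ?_
        apply FreeMonoid.toList.injective
        rw [h]; rfl
      rw [List.map_nil, List.prod_nil, hw, Matrix.one_apply_eq]
    · intro h _
      rw [List.map_nil, List.prod_nil]
      refine Matrix.one_apply_ne ?_
      intro hc
      apply h
      rw [hc]; rfl
  | cons i t IH =>
    intro hl w'
    have ht : t.length ≤ d := by
      have : (i :: t).length = t.length + 1 := rfl
      omega
    have IH' := fun k => IH ht k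
    have hprod : (((i :: t).map (Xmat n d)).prod) = Xmat n d i * ((t.map (Xmat n d)).prod) := by
      rw [List.map_cons, List.prod_cons]
    set A := ((t.map (Xmat n d)).prod) with hA
    have hlen_em : ∀ (a b : WordLE n d), a.1 = b.1 → a = b := fun a b h => Subtype.ext h
    constructor
    · intro hw'
      rw [hprod, Matrix.mul_apply]
      have httd : FreeMonoid.length (FreeMonoid.ofList t) ≤ d := by
        have : FreeMonoid.length (FreeMonoid.ofList t) = t.length := rfl
        omega
      have hterm : ∀ k : WordLE n d,
          Xmat n d i w' k * A k (em n d)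
            = if k = (id ⟨FreeMonoid.ofList t, httd⟩ : WordLE n d) then 1 else 0 := by
        intro k
        by_cases hk : k.1.toList = t
        · have hkeq : k = (id ⟨FreeMonoid.ofList t, httd⟩ : WordLE n d) := by
            refine Subtype.ext ?_
            apply FreeMonoid.toList.injective
            rw [hk]; rfl
          have hcol : A k (em n d) = 1 := (IH' k).1 hk
          have ha : w'.1.toList = i :: k.1.toList := by rw [hw', hk]
          have hb : ¬ (k.1.toList = i :: w'.1.toList) := by
            intro hc
            have h1 : k.1.toList.length = w'.1.toList.length + 1 := by rw [hc]; rfl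
            have h2 : k.1.toList.length = t.length := by rw [hk]
            have h3 : w'.1.toList.length = t.length + 1 := by rw [hw']; rfl
            omega
          rw [Xmat_apply, if_pos ha, if_neg hb, hcol, if_pos hkeq]
          norm_num
        · have hkne : k ≠ (id ⟨FreeMonoid.ofList t, httd⟩ : WordLE n d) := by
            intro hc
            apply hk
            rw [hc]
            exact FreeMonoid.toList_ofList t
          rw [if_neg hkne]
          by_cases hb : k.1.toList = i :: w'.1.toList
          · have hcol : A k (em n d) = 0 := by
              refine (IH' k).2 hk ?_
              have h1 : k.1.toList.length = w'.1.toList.length + 1 := by rw [hb]; rfl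
              have h3 : w'.1.toList.length = t.length + 1 := by rw [hw']; rfl
              omega
            rw [hcol, mul_zero]
          · have ha : ¬ (w'.1.toList = i :: k.1.toList) := by
              intro hc
              rw [hw'] at hc
              have : t = k.1.toList := by
                injection hc
              exact hk this.symm
            rw [Xmat_apply, if_neg ha, if_neg hb, add_zero, zero_mul]
      rw [Finset.sum_congr rfl fun k _ => hterm k, Finset.sum_ite_eq' Finset.univ]
      simp
    · intro hw' hlen
      have hlen' : t.length + 1 ≤ w'.1.toList.length := by
        have : (i :: t).length = t.length + 1 := rfl
        omega
      rw [hprod, Matrix.mul_apply]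
      refine Finset.sum_eq_zero fun k _ => ?_
      by_cases ha : w'.1.toList = i :: k.1.toList
      · have hkt : k.1.toList ≠ t := by
          intro hc
          apply hw'
          rw [ha, hc]
        have hklen : t.length ≤ k.1.toList.length := by
          have h1 : w'.1.toList.length = k.1.toList.length + 1 := by rw [ha]; rfl
          omega
        rw [(IH' k).2 hkt hklen, mul_zero]
      · by_cases hb : k.1.toList = i :: w'.1.toList
        · have h1 : k.1.toList.length = w'.1.toList.length + 1 := by rw [hb]; rfl
          have hkt : k.1.toList ≠ t := by
            intro hc
            have : k.1.toList.length = t.length := by rw [hc]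
            omega
          have hklen : t.length ≤ k.1.toList.length := by omega
          rw [(IH' k).2 hkt hklen, mul_zero]
        · rw [Xmat_apply, if_neg ha, if_neg hb, add_zero, zero_mul]

/-- the word evaluations are linearly independent -/
lemma lin_indep (d : ℕ) (c : WordLE n d → ℝ)
    (h : ∑ u : WordLE n d, c u • piX n d (ncWord u.1) = 0) : c = 0 := by
  by_contra hc
  have hex : ∃ u, c u ≠ 0 := by
    by_contra hall
    push_neg at hall
    exact hc (funext hall)
  set s := Finset.univ.filter (fun u : WordLE n d => c u ≠ 0) with hs
  have hsne : s.Nonempty := by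
    obtain ⟨u, hu⟩ := hex
    exact ⟨u, Finset.mem_filter.2 ⟨Finset.mem_univ u, hu⟩⟩
  obtain ⟨u₀, hu₀, hmax⟩ := Finset.exists_max_image s (fun u => u.1.toList.length) hsne
  have hu₀ne : c u₀ ≠ 0 := (Finset.mem_filter.1 hu₀).2
  have hentry : (∑ u : WordLE n d, c u • piX n d (ncWord u.1)) u₀ (em n d) = 0 := by
    rw [h]; rfl
  rw [Matrix.sum_apply] at hentry
  have hlen : ∀ u : WordLE n d, FreeMonoid.length u.1 = u.1.toList.length := fun u => rfl
  have hterm : ∀ u : WordLE n d,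
      (c u • piX n d (ncWord u.1)) u₀ (em n d) = if u = u₀ then c u₀ else 0 := by
    intro u
    have happ : (c u • piX n d (ncWord u.1)) u₀ (em n d)
        = c u * (piX n d (ncWord u.1)) u₀ (em n d) := rfl
    rw [happ, piX_word]
    have hud : u.1.toList.length ≤ d := by rw [← hlen u]; exact u.2
    by_cases he : u = u₀
    · subst he
      rw [(tri d u.1.toList hud u).1 rfl, mul_one, if_pos rfl]
    · rw [if_neg he]
      by_cases hcu : c u = 0
      · rw [hcu, zero_mul]
      · have hne : u₀.1.toList ≠ u.1.toList := by
          intro hc'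
          apply he
          exact (Subtype.ext (FreeMonoid.toList.injective hc')).symm
        have hle : u.1.toList.length ≤ u₀.1.toList.length :=
          hmax u (Finset.mem_filter.2 ⟨Finset.mem_univ u, hcu⟩)
        rw [(tri d u.1.toList hud u₀).2 hne hle, mul_zero]
  rw [Finset.sum_congr rfl fun u _ => hterm u, Finset.sum_ite_eq' Finset.univ] at hentry
  simp only [Finset.mem_univ, if_true] at hentry
  exact hu₀ne hentry

/-- expansion of `L0 ∘ PsiL` -/
lemma L0_PsiL (d : ℕ) (G : WordLE n d → WordLE n d → ℝ) :
    L0 n d (PsiL n d G) = ∑ u : WordLE n d, ∑ v : WordLE n d,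
      G u v * Matrix.trace ((piX n d (ncWord u.1))ᵀ * piX n d (ncWord v.1)) := by
  have hPsi : PsiL n d G
      = ∑ u : WordLE n d, ∑ v : WordLE n d, G u v • ncWord (u.1.reverse * v.1) := rfl
  rw [hPsi, map_sum]
  refine Finset.sum_congr rfl fun u _ => ?_
  rw [map_sum]
  refine Finset.sum_congr rfl fun v _ => ?_
  rw [map_smul, smul_eq_mul]
  congr 1
  have h1 : ncWord (u.1.reverse * v.1) = ncWord u.1.reverse * ncWord v.1 := by
    rw [ncWord_def, ncWord_def, ncWord_def, MonoidAlgebra.single_mul_single, one_mul]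
  have h2 : (ncWord u.1.reverse : NCPoly n) = ncStar (ncWord u.1) := by
    rw [ncWord_def, ncWord_def, ncStar_single]
  rw [L0_apply, h1, h2, map_mul, piX_star]

lemma trace_Q_expand (d : ℕ) (b : WordLE n d → ℝ) :
    Matrix.trace ((∑ u : WordLE n d, b u • piX n d (ncWord u.1))ᵀ
        * (∑ v : WordLE n d, b v • piX n d (ncWord v.1)))
      = ∑ u : WordLE n d, ∑ v : WordLE n d,
          (b u * b v) * Matrix.trace ((piX n d (ncWord u.1))ᵀ * piX n d (ncWord v.1)) := by
  rw [Matrix.transpose_sum]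
  rw [Finset.sum_congr rfl fun u (_ : u ∈ Finset.univ) =>
    Matrix.transpose_smul (b u) (piX n d (ncWord u.1))]
  rw [Finset.sum_mul_sum, Matrix.trace_sum]
  refine Finset.sum_congr rfl fun u _ => ?_
  rw [Matrix.trace_sum]
  refine Finset.sum_congr rfl fun v _ => ?_
  rw [smul_mul_assoc, mul_smul_comm, smul_smul, Matrix.trace_smul, smul_eq_mul]

/-- PSD Gram matrices on which `L0∘PsiL` vanishes are zero -/
lemma psd_L0_zero (d : ℕ) (G : WordLE n d → WordLE n d → ℝ)
    (hpsd : (Matrix.of G).PosSemidef) (h0 : L0 n d (PsiL n d G) = 0) : G = 0 := by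
  obtain ⟨B, hB⟩ := psd_sq hpsd
  have hG : ∀ u v, G u v = ∑ j : WordLE n d, B j u * B j v := by
    intro u v
    have h2 : (Matrix.of G) u v = (Bᴴ * B) u v := by rw [hB]
    have h3 : G u v = (Bᴴ * B) u v := h2
    rw [h3, Matrix.mul_apply]
    exact Finset.sum_congr rfl fun j _ => by rw [Matrix.conjTranspose_apply, star_trivial]
  have hexp : ∑ j : WordLE n d,
      Matrix.trace ((∑ u : WordLE n d, B j u • piX n d (ncWord u.1))ᵀ
        * (∑ v : WordLE n d, B j v • piX n d (ncWord v.1)))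
      = L0 n d (PsiL n d G) := by
    rw [L0_PsiL]
    calc ∑ j : WordLE n d,
        Matrix.trace ((∑ u : WordLE n d, B j u • piX n d (ncWord u.1))ᵀ
          * (∑ v : WordLE n d, B j v • piX n d (ncWord v.1)))
        = ∑ j : WordLE n d, ∑ u : WordLE n d, ∑ v : WordLE n d,
            (B j u * B j v) * Matrix.trace ((piX n d (ncWord u.1))ᵀ * piX n d (ncWord v.1)) :=
          Finset.sum_congr rfl fun j _ => trace_Q_expand d (fun u => B j u)
      _ = ∑ u : WordLE n d, ∑ j : WordLE n d, ∑ v : WordLE n d,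
            (B j u * B j v) * Matrix.trace ((piX n d (ncWord u.1))ᵀ * piX n d (ncWord v.1)) :=
          Finset.sum_comm
      _ = ∑ u : WordLE n d, ∑ v : WordLE n d, ∑ j : WordLE n d,
            (B j u * B j v) * Matrix.trace ((piX n d (ncWord u.1))ᵀ * piX n d (ncWord v.1)) :=
          Finset.sum_congr rfl fun u _ => Finset.sum_comm
      _ = ∑ u : WordLE n d, ∑ v : WordLE n d,
            G u v * Matrix.trace ((piX n d (ncWord u.1))ᵀ * piX n d (ncWord v.1)) := by
          refine Finset.sum_congr rfl fun u _ => Finset.sum_congr rfl fun v _ => ?_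
          rw [← Finset.sum_mul, ← hG u v]
  have h0' := hexp.trans h0
  have hQ0 : ∀ j : WordLE n d, (∑ u : WordLE n d, B j u • piX n d (ncWord u.1)) = 0 := by
    intro j
    have hz : Matrix.trace ((∑ u : WordLE n d, B j u • piX n d (ncWord u.1))ᵀ
        * (∑ v : WordLE n d, B j v • piX n d (ncWord v.1))) = 0 := by
      have hnn : ∀ j' ∈ Finset.univ, (0:ℝ) ≤
          Matrix.trace ((∑ u : WordLE n d, B j' u • piX n d (ncWord u.1))ᵀ
            * (∑ v : WordLE n d, B j' v • piX n d (ncWord v.1))) := by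
        intro j' _
        exact trace_transpose_mul_self_nonneg d _
      exact (Finset.sum_eq_zero_iff_of_nonneg hnn).1 h0' j (Finset.mem_univ j)
    exact eq_zero_of_trace_transpose_mul_self d _ hz
  have hB0 : ∀ j u, B j u = 0 := by
    intro j
    have := lin_indep d (fun u => B j u) (hQ0 j)
    intro u
    exact congrFun this u
  funext u v
  rw [hG u v]
  exact Finset.sum_eq_zero fun j _ => by rw [hB0 j u, zero_mul]

end SDAux
namespace SDAux

/-- image of a closed cone under a linear map with trivial kernel intersection is closed -/
lemma closed_image_of_cone {P E : Type*} [NormedAddCommGroup P] [NormedSpace ℝ P]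
    [FiniteDimensional ℝ P] [NormedAddCommGroup E] [NormedSpace ℝ E]
    (β : P →ₗ[ℝ] E) (C : Set P) (hC : IsClosed C)
    (hcone : ∀ t : ℝ, 0 ≤ t → ∀ x ∈ C, t • x ∈ C)
    (hker : ∀ x ∈ C, β x = 0 → x = 0) : IsClosed (β '' C) := by
  have hβc : Continuous β := β.continuous_of_finiteDimensional
  refine IsSeqClosed.isClosed ?_
  intro x y hx hy
  choose p hpC hpβ using hx
  by_cases hb : ∃ R : ℝ, ∃ᶠ j in Filter.atTop, ‖p j‖ ≤ R
  · obtain ⟨R, hR⟩ := hb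
    obtain ⟨φ, hφ, hφR⟩ := Filter.extraction_of_frequently_atTop hR
    have hcomp : IsCompact (Metric.closedBall (0 : P) R ∩ C) :=
      (isCompact_closedBall _ _).inter_right hC
    have hmem : ∀ j, (p ∘ φ) j ∈ Metric.closedBall (0 : P) R ∩ C := by
      intro j
      exact ⟨Metric.mem_closedBall.2 (by simpa using hφR j), hpC (φ j)⟩
    obtain ⟨a, ha, ψ, hψ, hconv⟩ := hcomp.tendsto_subseq hmem
    refine ⟨a, ha.2, ?_⟩
    have h1 : Filter.Tendsto (fun j => β ((p ∘ φ ∘ ψ) j)) Filter.atTop (nhds (β a)) :=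
      (hβc.continuousAt.tendsto.comp hconv)
    have h2 : Filter.Tendsto (fun j => β ((p ∘ φ ∘ ψ) j)) Filter.atTop (nhds y) := by
      have : (fun j => β ((p ∘ φ ∘ ψ) j)) = (fun j => x ((φ ∘ ψ) j)) := by
        funext j
        exact hpβ ((φ ∘ ψ) j)
      rw [this]
      exact hy.comp ((hφ.comp hψ).tendsto_atTop)
    exact tendsto_nhds_unique h1 h2
  · push_neg at hb
    have hnorm : Filter.Tendsto (fun j => ‖p j‖) Filter.atTop Filter.atTop := by
      rw [Filter.tendsto_atTop]
      intro R
      have hev := (hb R).mono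
        (fun j hj => le_of_lt hj)
      exact hev
    set q : ℕ → P := fun j => ‖p j‖⁻¹ • p j with hq
    have hqC : ∀ j, q j ∈ C := fun j => hcone _ (inv_nonneg.2 (norm_nonneg _)) _ (hpC j)
    have hqball : ∀ j, q j ∈ Metric.closedBall (0 : P) 1 ∩ C := by
      intro j
      refine ⟨Metric.mem_closedBall.2 ?_, hqC j⟩
      rw [dist_zero_right, hq]
      rcases eq_or_ne (p j) 0 with h | h
      · simp [h]
      · rw [norm_smul, norm_inv, norm_norm, inv_mul_cancel₀ (norm_ne_zero_iff.2 h)]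
    have hcomp : IsCompact (Metric.closedBall (0 : P) 1 ∩ C) :=
      (isCompact_closedBall _ _).inter_right hC
    obtain ⟨a, ha, ψ, hψ, hconv⟩ := hcomp.tendsto_subseq hqball
    have hnψ : Filter.Tendsto (fun j => ‖p (ψ j)‖) Filter.atTop Filter.atTop :=
      hnorm.comp hψ.tendsto_atTop
    have hnorm1 : ‖a‖ = 1 := by
      have hev : ∀ᶠ j in Filter.atTop, ‖(q ∘ ψ) j‖ = 1 := by
        have hev1 : ∀ᶠ j in Filter.atTop, (1:ℝ) ≤ ‖p (ψ j)‖ :=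
          hnψ.eventually_ge_atTop 1
        refine hev1.mono fun j hj => ?_
        have hne : p (ψ j) ≠ 0 := by
          intro h0
          rw [h0, norm_zero] at hj
          linarith
        show ‖(‖p (ψ j)‖⁻¹ • p (ψ j))‖ = 1
        rw [norm_smul, norm_inv, norm_norm, inv_mul_cancel₀ (norm_ne_zero_iff.2 hne)]
      have h1 : Filter.Tendsto (fun j => ‖(q ∘ ψ) j‖) Filter.atTop (nhds ‖a‖) :=
        (continuous_norm.continuousAt.tendsto).comp hconv
      have h2 : Filter.Tendsto (fun j => ‖(q ∘ ψ) j‖) Filter.atTop (nhds 1) :=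
        Filter.Tendsto.congr' (hev.mono fun j hj => hj.symm) tendsto_const_nhds
      exact tendsto_nhds_unique h1 h2
    have hβa : β a = 0 := by
      have h1 : Filter.Tendsto (fun j => β ((q ∘ ψ) j)) Filter.atTop (nhds (β a)) :=
        hβc.continuousAt.tendsto.comp hconv
      have h2 : Filter.Tendsto (fun j => β ((q ∘ ψ) j)) Filter.atTop (nhds 0) := by
        have heq : (fun j => β ((q ∘ ψ) j))
            = fun j => ‖p (ψ j)‖⁻¹ • (x (ψ j)) := by
          funext j
          show β (‖p (ψ j)‖⁻¹ • p (ψ j)) = _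
          rw [map_smul, hpβ (ψ j)]
        rw [heq]
        have hinv : Filter.Tendsto (fun j => ‖p (ψ j)‖⁻¹) Filter.atTop (nhds 0) :=
          hnψ.inv_tendsto_atTop
        have hxψ : Filter.Tendsto (fun j => x (ψ j)) Filter.atTop (nhds y) :=
          hy.comp hψ.tendsto_atTop
        have := hinv.smul hxψ
        rw [zero_smul] at this
        exact this
      exact tendsto_nhds_unique h1 h2
    have : a = 0 := hker a ha.2 hβa
    rw [this, norm_zero] at hnorm1
    exact absurd hnorm1.symm one_ne_zero

variable {n : ℕ}

lemma isClosed_psd (n d : ℕ) :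
    IsClosed {G : WordLE n d → WordLE n d → ℝ | (Matrix.of G).PosSemidef} := by
  have hset : {G : WordLE n d → WordLE n d → ℝ | (Matrix.of G).PosSemidef} =
      (⋂ uv : (WordLE n d) × (WordLE n d), {G : WordLE n d → WordLE n d → ℝ |
        G uv.2 uv.1 = G uv.1 uv.2}) ∩
      (⋂ x : WordLE n d → ℝ, {G : WordLE n d → WordLE n d → ℝ |
        0 ≤ ∑ u, x u * ∑ v, G u v * x v}) := by
    ext G
    show (Matrix.of G).PosSemidef ↔ _
    rw [Matrix.posSemidef_iff_dotProduct_mulVec]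
    constructor
    · rintro ⟨hherm, hpos⟩
      constructor
      · refine Set.mem_iInter.2 fun uv => ?_
        have := congrFun (congrFun hherm.symm uv.2) uv.1
        simpa [Matrix.conjTranspose_apply] using this
      · refine Set.mem_iInter.2 fun x => ?_
        have := hpos x
        simpa [dotProduct, Matrix.mulVec, Finset.mul_sum] using this
    · rintro ⟨hherm, hpos⟩
      constructor
      · ext uv1 uv2
        have := Set.mem_iInter.1 hherm (uv1, uv2)
        simpa [Matrix.conjTranspose_apply] using this
      · intro x
        have := Set.mem_iInter.1 hpos x
        simpa [dotProduct, Matrix.mulVec, Finset.mul_sum] using this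
  rw [hset]
  refine IsClosed.inter ?_ ?_
  · refine isClosed_iInter fun uv => ?_
    exact isClosed_eq ((continuous_apply uv.1).comp (continuous_apply uv.2))
      ((continuous_apply uv.2).comp (continuous_apply uv.1))
  · refine isClosed_iInter fun x => ?_
    have hc : Continuous fun G : WordLE n d → WordLE n d → ℝ =>
        ∑ u, x u * ∑ v, G u v * x v := by
      refine continuous_finset_sum _ fun u _ => Continuous.mul continuous_const ?_
      refine continuous_finset_sum _ fun v _ => Continuous.mul ?_ continuous_const
      exact (continuous_apply v).comp (continuous_apply u)
    exact isClosed_le continuous_const hc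

lemma psd_smul (d : ℕ) (t : ℝ) (ht : 0 ≤ t) (G : WordLE n d → WordLE n d → ℝ)
    (h : (Matrix.of G).PosSemidef) : (Matrix.of (t • G)).PosSemidef := by
  have hof : Matrix.of (t • G) = t • Matrix.of G := rfl
  rw [hof]
  rw [Matrix.posSemidef_iff_dotProduct_mulVec]
  constructor
  · show (t • Matrix.of G)ᴴ = t • Matrix.of G
    rw [Matrix.conjTranspose_smul, h.1]
    congr 1
  · intro x
    rw [Matrix.smul_mulVec, dotProduct_smul]
    exact smul_nonneg ht ((Matrix.posSemidef_iff_dotProduct_mulVec.1 h).2 x)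

lemma psd_add (d : ℕ) (G H : WordLE n d → WordLE n d → ℝ)
    (hG : (Matrix.of G).PosSemidef) (hH : (Matrix.of H).PosSemidef) :
    (Matrix.of (G + H)).PosSemidef := by
  have hof : Matrix.of (G + H) = Matrix.of G + Matrix.of H := rfl
  rw [hof]
  exact hG.add hH

end SDAux
namespace SDAux

variable {n : ℕ}

lemma degLE_mono {p : NCPoly n} {a b : ℕ} (hab : a ≤ b) (hp : degLE p a) : degLE p b :=
  fun w hw => le_trans (hp w hw) hab

/-- degrees of products can be flipped -/
lemma mul_degLE_comm {D : ℕ} {p q : NCPoly n} (h : degLE (p * q) D) : degLE (q * p) D := by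
  rcases eq_or_ne p 0 with rfl | hp
  · rw [mul_zero]; exact fun w hw => by simp at hw
  rcases eq_or_ne q 0 with rfl | hq
  · rw [zero_mul]; exact fun w hw => by simp at hw
  obtain ⟨u₀, hu₀, hu₀max⟩ := Finset.exists_max_image p.coeff.support
    (fun w => FreeMonoid.length w) (Finsupp.support_nonempty_iff.2 (MonoidAlgebra.coeff_eq_zero.not.2 hp))
  obtain ⟨v₀, hv₀, hv₀max⟩ := Finset.exists_max_image q.coeff.support
    (fun w => FreeMonoid.length w) (Finsupp.support_nonempty_iff.2 (MonoidAlgebra.coeff_eq_zero.not.2 hq))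
  have key : (p * q).coeff (u₀ * v₀) = p.coeff u₀ * q.coeff v₀ := by
    rw [MonoidAlgebra.coeff_mul, Finsupp.sum]
    rw [Finset.sum_eq_single_of_mem u₀ hu₀]
    · rw [Finsupp.sum]
      rw [Finset.sum_eq_single_of_mem v₀ hv₀]
      · rw [if_pos rfl]
      · intro a₂ ha₂ hne
        refine if_neg fun hc => hne ?_
        exact mul_left_cancel hc
    · intro a₁ ha₁ hne
      rw [Finsupp.sum]
      refine Finset.sum_eq_zero fun a₂ ha₂ => ?_
      refine if_neg fun hc => hne ?_
      have hl : FreeMonoid.length a₁ + FreeMonoid.length a₂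
          = FreeMonoid.length u₀ + FreeMonoid.length v₀ := by
        have := congrArg FreeMonoid.length hc
        rwa [FreeMonoid.length_mul, FreeMonoid.length_mul] at this
      have h1 : FreeMonoid.length a₁ ≤ FreeMonoid.length u₀ := hu₀max a₁ ha₁
      have h2 : FreeMonoid.length a₂ ≤ FreeMonoid.length v₀ := hv₀max a₂ ha₂
      have h3 : FreeMonoid.length a₁ = FreeMonoid.length u₀ := by omega
      have hc' : a₁.toList ++ a₂.toList = u₀.toList ++ v₀.toList := by
        have := congrArg FreeMonoid.toList hc
        rwa [FreeMonoid.toList_mul, FreeMonoid.toList_mul] at this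
      have := (List.append_inj hc' h3).1
      exact FreeMonoid.toList.injective this
  have hmem : u₀ * v₀ ∈ (p * q).coeff.support := by
    rw [Finsupp.mem_support_iff, key]
    exact mul_ne_zero (Finsupp.mem_support_iff.1 hu₀) (Finsupp.mem_support_iff.1 hv₀)
  have hDle : FreeMonoid.length v₀ + FreeMonoid.length u₀ ≤ D := by
    have := h _ hmem
    rw [FreeMonoid.length_mul] at this
    omega
  refine degLE_mono hDle (degLE_mul ?_ ?_)
  · exact fun w hw => hv₀max w hw
  · exact fun w hw => hu₀max w hw

variable (n d : ℕ)

/-- image of low-degree commutator span in coefficient space -/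
noncomputable def WE : Submodule ℝ (WordLE n (2*d) → ℝ) :=
  (Submodule.span ℝ (wgens n (2*d))).map (TL n (2*d))

/-- the map sending a Gram matrix and a commutator-part to total coefficients -/
noncomputable def betaL :
    ((WordLE n d → WordLE n d → ℝ) × (WordLE n (2*d) → ℝ)) →ₗ[ℝ] (WordLE n (2*d) → ℝ) :=
  ((TL n (2*d)).comp (PsiL n d)).comp (LinearMap.fst ℝ _ _) + LinearMap.snd ℝ _ _

lemma betaL_apply (G : WordLE n d → WordLE n d → ℝ) (ω : WordLE n (2*d) → ℝ) :
    betaL n d (G, ω) = TL n (2*d) (PsiL n d G) + ω := rfl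

/-- the feasible cone in coefficient space -/
def CPset : Set ((WordLE n d → WordLE n d → ℝ) × (WordLE n (2*d) → ℝ)) :=
  {x | (Matrix.of x.1).PosSemidef ∧ x.2 ∈ WE n d}

def KEset : Set (WordLE n (2*d) → ℝ) := betaL n d '' CPset n d

lemma psd_of_sq {d : ℕ} (B : WordLE n d → WordLE n d → ℝ) :
    (Matrix.of (fun u v => ∑ j : WordLE n d, B j u * B j v)).PosSemidef := by
  have hof : Matrix.of (fun u v => ∑ j : WordLE n d, B j u * B j v)
      = (Matrix.of B)ᴴ * Matrix.of B := by
    ext u v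
    rw [Matrix.mul_apply, Matrix.of_apply]
    exact Finset.sum_congr rfl fun j _ => by
      rw [Matrix.conjTranspose_apply, Matrix.of_apply, Matrix.of_apply, star_trivial]
  rw [hof]
  exact Matrix.posSemidef_conjTranspose_mul_self _

lemma psd_to_sohs {d : ℕ} (G : WordLE n d → WordLE n d → ℝ)
    (hpsd : (Matrix.of G).PosSemidef) : PsiL n d G ∈ SOHSdeg n d := by
  obtain ⟨B, hB⟩ := psd_sq hpsd
  have hG : PsiL n d G = PsiL n d (fun u v => ∑ j : WordLE n d, B j u * B j v) := by
    have h4 : G = fun u v => ∑ j : WordLE n d, B j u * B j v := by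
      funext u v
      have h2 : (Matrix.of G) u v = (Bᴴ * B) u v := by rw [hB]
      have h3 : G u v = (Bᴴ * B) u v := h2
      rw [h3, Matrix.mul_apply]
      exact Finset.sum_congr rfl fun j _ => by
        rw [Matrix.conjTranspose_apply, star_trivial]
    rw [h4]
  rw [hG]
  exact B_to_sohs d _

lemma mem_KE_of {x : NCPoly n}
    (hx : ∃ σ ∈ SOHSdeg n d, ∃ c ∈ Submodule.span ℝ (wgens n (2*d)), x = σ + c) :
    TL n (2*d) x ∈ KEset n d := by
  obtain ⟨σ, hσ, c, hc, rfl⟩ := hx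
  obtain ⟨B, hB⟩ := sohs_to_B d hσ
  refine ⟨(fun u v => ∑ j : WordLE n d, B j u * B j v, TL n (2*d) c),
    ⟨psd_of_sq n B, ⟨c, hc, rfl⟩⟩, ?_⟩
  rw [betaL_apply, ← hB, ← map_add]

lemma mem_KE_to {x : NCPoly n} (hxdeg : degLE x (2*d)) (hx : TL n (2*d) x ∈ KEset n d) :
    ∃ σ ∈ SOHSdeg n d, ∃ c ∈ Submodule.span ℝ (wgens n (2*d)), x = σ + c := by
  obtain ⟨⟨G, ω⟩, ⟨hpsd, hω⟩, hbeta⟩ := hx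
  obtain ⟨c, hc, rfl⟩ := hω
  rw [betaL_apply, ← map_add] at hbeta
  have hdeg2 : degLE (PsiL n d G + c) (2*d) := by
    rw [← mem_degSub]
    exact add_mem (degLE_PsiL d G) (wspan_degLE hc)
  have := TL_inj hdeg2 hxdeg hbeta
  exact ⟨PsiL n d G, psd_to_sohs n G hpsd, c, hc, this.symm⟩

lemma CP_closed : IsClosed (CPset n d) := by
  have heq : CPset n d =
      (Prod.fst ⁻¹' {G : WordLE n d → WordLE n d → ℝ | (Matrix.of G).PosSemidef}) ∩
      (Prod.snd ⁻¹' (WE n d : Set (WordLE n (2*d) → ℝ))) := rfl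
  rw [heq]
  exact ((isClosed_psd n d).preimage continuous_fst).inter
    ((WE n d).closed_of_finiteDimensional.preimage continuous_snd)

lemma CP_cone : ∀ t : ℝ, 0 ≤ t → ∀ x ∈ CPset n d, t • x ∈ CPset n d := by
  rintro t ht ⟨G, ω⟩ ⟨hpsd, hω⟩
  exact ⟨psd_smul d t ht G hpsd, Submodule.smul_mem _ t hω⟩

lemma CP_ker : ∀ x ∈ CPset n d, betaL n d x = 0 → x = 0 := by
  rintro ⟨G, ω⟩ ⟨hpsd, hω⟩ hbeta
  obtain ⟨c, hc, rfl⟩ := hω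
  rw [betaL_apply, ← map_add] at hbeta
  have hdeg2 : degLE (PsiL n d G + c) (2*d) := by
    rw [← mem_degSub]
    exact add_mem (degLE_PsiL d G) (wspan_degLE hc)
  have heq : PsiL n d G + c = 0 := by
    refine TL_inj hdeg2 ?_ ?_
    · intro w hw; simp at hw
    · rw [map_zero]; exact hbeta
  have hPsic : PsiL n d G = -c := eq_neg_of_add_eq_zero_left heq
  have hL0 : L0 n d (PsiL n d G) = 0 := by
    rw [hPsic, map_neg, L0_wspan hc, neg_zero]
  have hG0 : G = 0 := psd_L0_zero d G hpsd hL0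
  have hc0 : c = 0 := by
    have : PsiL n d G = 0 := by rw [hG0, map_zero]
    rw [this, zero_add] at heq
    exact heq
  rw [hG0, hc0, map_zero]
  rfl

end SDAux
namespace SDAux

variable {n : ℕ}

lemma CP_convex (n d : ℕ) : Convex ℝ (CPset n d) := by
  intro x hx y hy a b ha hb hab
  constructor
  · have h1 : (a • x + b • y).1 = a • x.1 + b • y.1 := rfl
    rw [h1]
    exact psd_add d _ _ (psd_smul d a ha _ hx.1) (psd_smul d b hb _ hy.1)
  · exact Submodule.add_mem _ (Submodule.smul_mem _ a hx.2) (Submodule.smul_mem _ b hy.2)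

lemma KE_convex (n d : ℕ) : Convex ℝ (KEset n d) :=
  (CP_convex n d).linear_image (betaL n d)

lemma KE_closed (n d : ℕ) : IsClosed (KEset n d) :=
  closed_image_of_cone (betaL n d) (CPset n d) (CP_closed n d) (CP_cone n d) (CP_ker n d)

lemma zero_mem_KE (n d : ℕ) : (0 : WordLE n (2*d) → ℝ) ∈ KEset n d := by
  refine ⟨0, ⟨?_, Submodule.zero_mem _⟩, map_zero _⟩
  show (Matrix.of (0 : WordLE n d → WordLE n d → ℝ)).PosSemidef
  exact Matrix.PosSemidef.zero

lemma KE_cone (n d : ℕ) : ∀ t : ℝ, 0 ≤ t → ∀ b ∈ KEset n d, t • b ∈ KEset n d := by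
  rintro t ht b ⟨x, hx, rfl⟩
  exact ⟨t • x, CP_cone n d t ht x hx, map_smul _ _ _⟩

lemma zero_mem_sohs (n d : ℕ) : (0 : NCPoly n) ∈ SOHSdeg n d :=
  ⟨0, fun i => 0, fun i => by intro w hw; simp at hw, by simp⟩

lemma one_mem_sohs (n d : ℕ) : (1 : NCPoly n) ∈ SOHSdeg n d := by
  refine ⟨1, fun _ => 1, fun _ => degLE_one, ?_⟩
  simp [ncStar_one]

lemma sohs_star {d : ℕ} {σ : NCPoly n} (hσ : σ ∈ SOHSdeg n d) : ncStar σ = σ := by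
  obtain ⟨k, g, hdeg', rfl⟩ := hσ
  rw [← starL_apply, map_sum]
  refine Finset.sum_congr rfl fun i _ => ?_
  rw [starL_apply, ncStar_mul, ncStar_ncStar]

lemma star_wgen {D : ℕ} {x : NCPoly n} (hx : x ∈ wgens n D) : ncStar x ∈ wgens n D := by
  obtain ⟨u', v', hlen, rfl⟩ := hx
  have h1 : ncStar (ncWord (u' * v') : NCPoly n) = ncWord (v'.reverse * u'.reverse) := by
    rw [ncWord_def, ncStar_single, FreeMonoid.reverse_mul]
    rfl
  have h2 : ncStar (ncWord (v' * u') : NCPoly n) = ncWord (u'.reverse * v'.reverse) := by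
    rw [ncWord_def, ncStar_single, FreeMonoid.reverse_mul]
    rfl
  have hcomp : ncStar (ncWord (u' * v') - ncWord (v' * u'))
      = ncWord (v'.reverse * u'.reverse) - ncWord (u'.reverse * v'.reverse) := by
    rw [← starL_apply, map_sub, starL_apply, starL_apply, h1, h2]
  rw [hcomp]
  refine ⟨v'.reverse, u'.reverse, ?_, rfl⟩
  rw [FreeMonoid.length_mul, FreeMonoid.length_reverse, FreeMonoid.length_reverse]
  rw [FreeMonoid.length_mul] at hlen
  omega

lemma span_star {D : ℕ} {c : NCPoly n} (hc : c ∈ Submodule.span ℝ (wgens n D)) :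
    ncStar c ∈ Submodule.span ℝ (wgens n D) := by
  induction hc using Submodule.span_induction with
  | mem x hx => exact Submodule.subset_span (star_wgen hx)
  | zero =>
    rw [ncStar_zero]
    exact Submodule.zero_mem _
  | add x y hx hy hx' hy' =>
    rw [ncStar_add]
    exact Submodule.add_mem _ hx' hy'
  | smul t x hx hx' =>
    rw [ncStar_smul]
    exact Submodule.smul_mem _ _ hx'

set_option maxHeartbeats 2000000 in
/-- main separation construction -/
lemma separation (n d : ℕ) {f : NCPoly n} {τ : ℝ} (hdeg : degLE f (2*d)) (hf : ncStar f = f)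
    (hnot : ¬ ∃ σ ∈ SOHSdeg n d, ∃ c ∈ Submodule.span ℝ (wgens n (2*d)), f - τ • 1 = σ + c) :
    ∃ L : NCPoly n →ₗ[ℝ] ℝ,
      (∀ p : NCPoly n, degLE p (2*d) → L (ncStar p) = L p) ∧
      L 1 = 1 ∧
      (∀ σ ∈ SOHSdeg n d, 0 ≤ L σ) ∧
      (∀ p q : NCPoly n, degLE (p*q) (2*d) → L (p*q) = L (q*p)) ∧
      L f < τ := by
  have hfτdeg : degLE (f - τ • 1) (2*d) := by
    rw [← mem_degSub]
    exact sub_mem hdeg (Submodule.smul_mem _ τ degLE_one)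
  have hx0 : TL n (2*d) (f - τ • 1) ∉ KEset n d := fun hmem => hnot (mem_KE_to n d hfτdeg hmem)
  obtain ⟨y, u, hyu, hy⟩ :=
    geometric_hahn_banach_point_closed (KE_convex n d) (KE_closed n d) hx0
  have hu0 : u < 0 := by
    have := hy 0 (zero_mem_KE n d)
    rwa [map_zero] at this
  have hynn : ∀ b ∈ KEset n d, 0 ≤ y b := by
    intro b hb
    by_contra hneg
    push_neg at hneg
    have hneg' : y b < 0 := hneg
    have ht : 0 < (u - 1) / y b := div_pos_of_neg_of_neg (by linarith) hneg'
    have hmem := KE_cone n d _ (le_of_lt ht) b hb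
    have hlt := hy _ hmem
    rw [map_smul, smul_eq_mul, div_mul_cancel₀ _ (ne_of_lt hneg')] at hlt
    linarith
  set L1 : NCPoly n →ₗ[ℝ] ℝ := (y.toLinearMap).comp (TL n (2*d)) with hL1def
  have hL1 : ∀ x : NCPoly n, L1 x = y (TL n (2*d) x) := by
    intro x; rw [hL1def]; rfl
  have hL1K : ∀ x : NCPoly n,
      (∃ σ ∈ SOHSdeg n d, ∃ c ∈ Submodule.span ℝ (wgens n (2*d)), x = σ + c) → 0 ≤ L1 x := by
    intro x hx
    rw [hL1]
    exact hynn _ (mem_KE_of n d hx)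
  have hL1sohs : ∀ σ ∈ SOHSdeg n d, 0 ≤ L1 σ := fun σ hσ =>
    hL1K σ ⟨σ, hσ, 0, Submodule.zero_mem _, (add_zero σ).symm⟩
  have hL1w : ∀ c ∈ Submodule.span ℝ (wgens n (2*d)), L1 c = 0 := by
    intro c hc
    have h1 : 0 ≤ L1 c := hL1K c ⟨0, zero_mem_sohs n d, c, hc, (zero_add c).symm⟩
    have h2 : 0 ≤ L1 (-c) :=
      hL1K (-c) ⟨0, zero_mem_sohs n d, -c, Submodule.neg_mem _ hc, (zero_add _).symm⟩
    rw [map_neg] at h2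
    linarith
  have hL1x0 : L1 (f - τ • 1) < 0 := by
    rw [hL1]
    exact lt_trans hyu hu0
  set L2 : NCPoly n →ₗ[ℝ] ℝ := (1/2 : ℝ) • (L1 + L1.comp (starL n)) with hL2def
  have hL2 : ∀ x, L2 x = (1/2) * (L1 x + L1 (ncStar x)) := by
    intro x; rw [hL2def]; rfl
  have hL2star : ∀ p, L2 (ncStar p) = L2 p := by
    intro p; rw [hL2, hL2, ncStar_ncStar, add_comm]
  have hL2sohs : ∀ σ ∈ SOHSdeg n d, 0 ≤ L2 σ := by
    intro σ hσ
    rw [hL2, sohs_star hσ]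
    have := hL1sohs σ hσ
    linarith
  have hL2w : ∀ c ∈ Submodule.span ℝ (wgens n (2*d)), L2 c = 0 := by
    intro c hc
    rw [hL2, hL1w c hc, hL1w _ (span_star hc)]
    norm_num
  have hfτstar : ncStar (f - τ • 1) = f - τ • 1 := by
    rw [← starL_apply, map_sub, map_smul, starL_apply, starL_apply, hf, ncStar_one]
  have ha : L2 (f - τ • 1) < 0 := by
    rw [hL2, hfτstar]
    linarith
  set a : ℝ := L2 (f - τ • 1) with hadef
  set b : ℝ := L0 n d (f - τ • 1) with hbdef
  set ε : ℝ := (-a) / (2 * (|b| + 1)) with hεdef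
  have hεpos : 0 < ε := div_pos (by linarith) (by positivity)
  have hεb : ε * b < -a := by
    have h1 : ε * b ≤ ε * |b| := mul_le_mul_of_nonneg_left (le_abs_self b) (le_of_lt hεpos)
    have h2 : ε * |b| < -a := by
      rw [hεdef, div_mul_eq_mul_div, div_lt_iff₀ (by positivity)]
      nlinarith [abs_nonneg b]
    linarith
  set L3 : NCPoly n →ₗ[ℝ] ℝ := L2 + ε • L0 n d with hL3def
  have hL3 : ∀ x, L3 x = L2 x + ε * L0 n d x := by
    intro x; rw [hL3def]; rfl
  have hL3one : 0 < L3 1 := by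
    rw [hL3 1, L0_one]
    have h1 : 0 ≤ L2 1 := hL2sohs 1 (one_mem_sohs n d)
    have h2 : (0:ℝ) < (Fintype.card (WordLE n d) : ℝ) := by
      have : 0 < Fintype.card (WordLE n d) := Fintype.card_pos_iff.2 ⟨em n d⟩
      exact_mod_cast this
    nlinarith
  refine ⟨(L3 1)⁻¹ • L3, ?_, ?_, ?_, ?_, ?_⟩
  · intro p _
    simp only [LinearMap.smul_apply, smul_eq_mul]
    rw [hL3 (ncStar p), hL3 p, hL2star, L0_star]
  · simp only [LinearMap.smul_apply, smul_eq_mul]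
    exact inv_mul_cancel₀ (ne_of_gt hL3one)
  · intro σ hσ
    simp only [LinearMap.smul_apply, smul_eq_mul]
    refine mul_nonneg (inv_nonneg.2 (le_of_lt hL3one)) ?_
    rw [hL3 σ]
    have h1 := hL2sohs σ hσ
    have h2 := L0_sohs d d hσ
    nlinarith
  · intro p q hpq
    simp only [LinearMap.smul_apply, smul_eq_mul]
    have hcomm : p * q - q * p ∈ Submodule.span ℝ (wgens n (2*d)) := by
      refine mem_wspan ?_ ?_
      · rw [← mem_degSub]
        exact sub_mem hpq (mul_degLE_comm hpq)
      · rw [map_sub, Cmap_mul_comm, sub_self]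
    have h2 : L2 (p * q) = L2 (q * p) := by
      have := hL2w _ hcomm
      rw [map_sub] at this
      linarith
    rw [hL3 (p * q), hL3 (q * p), h2, L0_mul_comm d p q]
  · simp only [LinearMap.smul_apply, smul_eq_mul]
    have hkey : L3 (f - τ • 1) < 0 := by
      rw [hL3 (f - τ • 1), ← hadef, ← hbdef]
      linarith
    have hlin : L3 f - τ * L3 1 < 0 := by
      rw [map_sub, map_smul, smul_eq_mul] at hkey
      linarith
    rw [← div_eq_inv_mul, div_lt_iff₀ hL3one]
    linarith

/-- weak duality -/
lemma weak_duality (n d : ℕ) {f : NCPoly n} (hdeg : degLE f (2*d)) {τ : ℝ}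
    {L : NCPoly n →ₗ[ℝ] ℝ}
    (hτ : ∃ σ ∈ SOHSdeg n d, cycEq (f - τ • 1) σ)
    (hL1 : L 1 = 1)
    (hLp : ∀ σ ∈ SOHSdeg n d, 0 ≤ L σ)
    (hLt : ∀ p q : NCPoly n, degLE (p*q) (2*d) → L (p*q) = L (q*p)) : τ ≤ L f := by
  obtain ⟨σ, hσ, k, p, q, hcyc⟩ := hτ
  have hC : Cmap n ((f - τ • 1) - σ) = 0 := by
    rw [hcyc]
    exact Cmap_comm_sum p q
  have hdeg2 : degLE ((f - τ • 1) - σ) (2*d) := by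
    rw [← mem_degSub]
    exact sub_mem (sub_mem hdeg (Submodule.smul_mem _ τ degLE_one)) (sohs_degLE d hσ)
  have hspan : (f - τ • 1) - σ ∈ Submodule.span ℝ (wgens n (2*d)) := mem_wspan hdeg2 hC
  have hLw : ∀ x ∈ Submodule.span ℝ (wgens n (2*d)), L x = 0 := by
    intro x hx
    have hsub : wgens n (2*d) ⊆ (LinearMap.ker L : Set (NCPoly n)) := by
      rintro z ⟨u', v', hlen, rfl⟩
      have h1 : ncWord (u' * v') = ncWord u' * ncWord v' := by
        rw [ncWord_def, ncWord_def, ncWord_def, MonoidAlgebra.single_mul_single, one_mul]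
      have h2 : ncWord (v' * u') = ncWord v' * ncWord u' := by
        rw [ncWord_def, ncWord_def, ncWord_def, MonoidAlgebra.single_mul_single, one_mul]
      have hdegp : degLE (ncWord u' * ncWord v') (2*d) := by
        rw [← h1, ncWord_def]
        exact degLE_single hlen
      have : L (ncWord (u' * v') - ncWord (v' * u')) = 0 := by
        rw [map_sub, h1, h2, hLt _ _ hdegp, sub_self]
      exact this
    exact (Submodule.span_le.2 hsub) hx
  have h0 := hLw _ hspan
  rw [map_sub, map_sub, map_smul, smul_eq_mul, hL1] at h0
  have := hLp σ hσ
  linarith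

/-- feasibility characterization -/
lemma feas_iff (n d : ℕ) {f : NCPoly n} (hdeg : degLE f (2*d)) (τ : ℝ) :
    (∃ σ ∈ SOHSdeg n d, cycEq (f - τ • 1) σ) ↔
    (∃ σ ∈ SOHSdeg n d, ∃ c ∈ Submodule.span ℝ (wgens n (2*d)), f - τ • 1 = σ + c) := by
  constructor
  · rintro ⟨σ, hσ, k, p, q, hcyc⟩
    have hC : Cmap n ((f - τ • 1) - σ) = 0 := by
      rw [hcyc]; exact Cmap_comm_sum p q
    have hdeg2 : degLE ((f - τ • 1) - σ) (2*d) := by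
      rw [← mem_degSub]
      exact sub_mem (sub_mem hdeg (Submodule.smul_mem _ τ degLE_one)) (sohs_degLE d hσ)
    refine ⟨σ, hσ, (f - τ • 1) - σ, mem_wspan hdeg2 hC, by abel⟩
  · rintro ⟨σ, hσ, c, hc, heq⟩
    obtain ⟨k, p, q, hpq⟩ := wspan_to_comm hc
    refine ⟨σ, hσ, k, p, q, ?_⟩
    rw [← hpq, heq]
    abel

end SDAux

/-- **strong duality, trace case.** For symmetric `f` of degree at most
`2d`, `sup { τ : f - τ ∼cyc some element of Σ_{2d} }` equals the infimum of `L(f)` over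
symmetric unital tracial linear functionals `L` on `ℝ⟨x⟩_{2d}` nonnegative on `Σ_{2d}`. -/
theorem strong_duality_trace {n d : ℕ} (f : NCPoly n)
    (hf : ncStar f = f) (hdeg : degLE f (2 * d)) :
    sSup { x : EReal | ∃ τ : ℝ,
        (∃ σ ∈ SOHSdeg n d, cycEq (f - τ • 1) σ) ∧ x = (τ : EReal) } =
    sInf { x : EReal | ∃ L : NCPoly n →ₗ[ℝ] ℝ,
        (∀ p : NCPoly n, degLE p (2 * d) → L (ncStar p) = L p) ∧
        L 1 = 1 ∧
        (∀ σ ∈ SOHSdeg n d, 0 ≤ L σ) ∧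
        (∀ p q : NCPoly n, degLE (p * q) (2 * d) → L (p * q) = L (q * p)) ∧
        x = (L f : EReal) } := by
  refine le_antisymm ?_ ?_
  · refine sSup_le ?_
    rintro x ⟨τ, hτ, rfl⟩
    refine le_sInf ?_
    rintro y ⟨L, hLs, hL1, hLp, hLt, rfl⟩
    rw [EReal.coe_le_coe_iff]
    exact SDAux.weak_duality n d hdeg hτ hL1 hLp hLt
  · by_contra hlt
    rw [not_le] at hlt
    obtain ⟨z, hz1, hz2⟩ := exists_between hlt
    induction z using EReal.rec with
    | bot => exact absurd hz1 (not_lt_bot)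
    | top => exact absurd hz2 (not_top_lt)
    | coe τ =>
      have hfeas : ¬ (∃ σ ∈ SOHSdeg n d, cycEq (f - τ • 1) σ) := by
        intro hcon
        have hmem : (τ : EReal) ∈ { x : EReal | ∃ τ' : ℝ,
            (∃ σ ∈ SOHSdeg n d, cycEq (f - τ' • 1) σ) ∧ x = (τ' : EReal) } :=
          ⟨τ, hcon, rfl⟩
        have hle := le_sSup hmem
        exact absurd (lt_of_le_of_lt hle hz1) (lt_irrefl _)
      rw [SDAux.feas_iff n d hdeg τ] at hfeas
      obtain ⟨L, hLs, hL1, hLp, hLt, hLf⟩ := SDAux.separation n d hdeg hf hfeas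
      have hmem2 : (L f : EReal) ∈ { x : EReal | ∃ L' : NCPoly n →ₗ[ℝ] ℝ,
          (∀ p : NCPoly n, degLE p (2 * d) → L' (ncStar p) = L' p) ∧
          L' 1 = 1 ∧
          (∀ σ ∈ SOHSdeg n d, 0 ≤ L' σ) ∧
          (∀ p q : NCPoly n, degLE (p * q) (2 * d) → L' (p * q) = L' (q * p)) ∧
          x = (L' f : EReal) } :=
        ⟨L, hLs, hL1, hLp, hLt, rfl⟩
      have h3 := sInf_le hmem2
      have h4 : (L f : EReal) < (τ : EReal) := EReal.coe_lt_coe_iff.2 hLf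
      exact absurd (lt_trans (lt_of_le_of_lt h3 h4) hz2) (lt_irrefl _)
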